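/- arXiv:2602.00714 — 3 statements merged into one kernel-verified Lean document; each statement's English description precedes it below -/
import Mathlib

section
/- Suppose β_h, β_m, A, H, μ_h, μ_m, ρ_h, τ_b > 0 and define R₀ = sqrt(β_h β_m A H e^{−μ_h τ_b} / (μ_h μ_m ρ_h)). If R₀ > 1, then there exists a unique triple (u₁*, u₂*, u₃*) of positive reals satisfying the steady-state equations β_m (A − u₁*) u₃* = μ_m u₁*, H = β_h u₁* u₂* + μ_h u₂*, and β_h e^{−μ_h τ_b} u₁* u₂* = ρ_h u₃*, with u₁* < A. -/
theorem steady_state_exists_unique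
    (βh βm A H μh μm ρh τb : ℝ)
    (hβh : 0 < βh) (hβm : 0 < βm) (hA : 0 < A) (hH : 0 < H)
    (hμh : 0 < μh) (hμm : 0 < μm) (hρh : 0 < ρh) (hτb : 0 < τb)
    (hR0 : 1 < Real.sqrt (βh * βm * A * H * Real.exp (-μh * τb) / (μh * μm * ρh))) :
    ∃! u : ℝ × ℝ × ℝ,
      0 < u.1 ∧ 0 < u.2.1 ∧ 0 < u.2.2 ∧ u.1 < A ∧
      βm * (A - u.1) * u.2.2 = μm * u.1 ∧
      H = βh * u.1 * u.2.1 + μh * u.2.1 ∧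
      βh * Real.exp (-μh * τb) * u.1 * u.2.1 = ρh * u.2.2 := by
  set E := Real.exp (-μh * τb) with hEdef
  have hE : 0 < E := Real.exp_pos _
  have hx : 0 < βh * βm * A * H * E / (μh * μm * ρh) := by positivity
  have hkey : μh * μm * ρh < βh * βm * A * H * E := by
    have h1 : 1 < βh * βm * A * H * E / (μh * μm * ρh) := by
      nlinarith [Real.sq_sqrt hx.le, hR0,
        Real.sqrt_nonneg (βh * βm * A * H * E / (μh * μm * ρh))]
    have hd : 0 < μh * μm * ρh := by positivity
    rw [lt_div_iff₀ hd] at h1; linarith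
  have hdenpos : 0 < βh * βm * H * E + μm * ρh * βh := by positivity
  set u1 : ℝ := (βh * βm * H * E * A - μm * ρh * μh) / (βh * βm * H * E + μm * ρh * βh)
    with hu1
  have hu1pos : 0 < u1 := by
    apply div_pos _ hdenpos; nlinarith
  have hu1A : u1 < A := by
    rw [hu1, div_lt_iff₀ hdenpos]
    nlinarith [mul_pos (mul_pos hμm hρh) hμh,
      mul_pos (mul_pos (mul_pos hA hμm) hρh) hβh]
  have hd2 : 0 < βh * u1 + μh := by positivity
  have heq1 : βm * βh * E * H * (A - u1) = μm * ρh * (βh * u1 + μh) := by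
    rw [hu1]; field_simp; ring
  refine ⟨(u1, H / (βh * u1 + μh), βh * E * u1 * (H / (βh * u1 + μh)) / ρh),
    ⟨hu1pos, by positivity, by positivity, hu1A, ?_, ?_, ?_⟩, ?_⟩
  · show βm * (A - u1) * (βh * E * u1 * (H / (βh * u1 + μh)) / ρh) = μm * u1
    clear_value u1
    field_simp
    linear_combination heq1
  · show H = βh * u1 * (H / (βh * u1 + μh)) + μh * (H / (βh * u1 + μh))
    field_simp
  · show βh * E * u1 * (H / (βh * u1 + μh)) = ρh * (βh * E * u1 * (H / (βh * u1 + μh)) / ρh)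
    field_simp
  · rintro ⟨v1, v2, v3⟩ ⟨hv1, hv2, hv3, hvA, he1, he2, he3⟩
    simp only at hv1 hv2 hv3 hvA he1 he2 he3
    have hdv : 0 < βh * v1 + μh := by positivity
    have hkeyv : βm * βh * E * H * (A - v1) = μm * ρh * (βh * v1 + μh) := by
      have h1 : v1 * (βm * βh * E * H * (A - v1)) = v1 * (μm * ρh * (βh * v1 + μh)) := by
        linear_combination (βm * βh * E * v1 * (A - v1)) * he2 +
          (βm * (A - v1) * (βh * v1 + μh)) * he3 + (ρh * (βh * v1 + μh)) * he1
      exact mul_left_cancel₀ hv1.ne' h1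
    have hv1u : v1 = u1 := by
      rw [hu1, eq_div_iff hdenpos.ne']
      linear_combination -hkeyv
    have hv2u : v2 = H / (βh * u1 + μh) := by
      rw [eq_div_iff hd2.ne', ← hv1u]
      linear_combination -he2
    have hv3u : v3 = βh * E * u1 * (H / (βh * u1 + μh)) / ρh := by
      rw [eq_div_iff hρh.ne', ← hv2u, ← hv1u]
      linear_combination -he3
    simp [hv1u, hv2u, hv3u]
end

section
/- Suppose β_h, β_m, A, H, μ_h, μ_m, ρ_h, τ_b > 0 and define R₀ = sqrt(β_h β_m A H e^{−μ_h τ_b} / (μ_h μ_m ρ_h)). If R₀ ≤ 1, then there is no triple (u₁*, u₂*, u₃*) of strictly positive reals with u₁* < A satisfying β_m (A − u₁*) u₃* = μ_m u₁*, H = β_h u₁* u₂* + μ_h u₂*, and β_h e^{−μ_h τ_b} u₁* u₂* = ρ_h u₃*. -/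
theorem no_positive_steady_state_of_R0_le_one
    (βh βm A H μh μm ρh τb : ℝ)
    (hβh : 0 < βh) (hβm : 0 < βm) (hA : 0 < A) (hH : 0 < H)
    (hμh : 0 < μh) (hμm : 0 < μm) (hρh : 0 < ρh) (hτb : 0 < τb)
    (hR0 : Real.sqrt (βh * βm * A * H * Real.exp (-μh * τb) / (μh * μm * ρh)) ≤ 1) :
    ¬ ∃ u₁ u₂ u₃ : ℝ,
      0 < u₁ ∧ 0 < u₂ ∧ 0 < u₃ ∧ u₁ < A ∧
      βm * (A - u₁) * u₃ = μm * u₁ ∧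
      H = βh * u₁ * u₂ + μh * u₂ ∧
      βh * Real.exp (-μh * τb) * u₁ * u₂ = ρh * u₃ := by
  rintro ⟨u₁, u₂, u₃, h1, h2, h3, h4, e1, e2, e3⟩
  set e := Real.exp (-μh * τb) with he
  have hepos : 0 < e := Real.exp_pos _
  have hDpos : 0 < μh * μm * ρh := by positivity
  have hargnn : 0 ≤ βh * βm * A * H * e / (μh * μm * ρh) := by positivity
  have harg1 : βh * βm * A * H * e / (μh * μm * ρh) ≤ 1 := by
    nlinarith [Real.sq_sqrt hargnn, Real.sqrt_nonneg (βh * βm * A * H * e / (μh * μm * ρh)), hR0]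
  have key : βh * βm * A * H * e ≤ μh * μm * ρh := by
    rw [div_le_one hDpos] at harg1
    exact harg1
  -- From e3 and e1: βm * (A - u₁) * βh * e * u₁ * u₂ = μm * ρh * u₁
  have hcomb : βm * βh * e * (A - u₁) * H = μm * ρh * (βh * u₁ + μh) := by
    have h5 : βm * (A - u₁) * (ρh * u₃) = μm * ρh * u₁ := by ring_nf; nlinarith [e1]
    rw [← e3] at h5
    have h6 : βm * βh * e * (A - u₁) * u₂ * u₁ = μm * ρh * u₁ := by linarith [h5]; 
    have h7 : βm * βh * e * (A - u₁) * u₂ = μm * ρh := by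
      have := mul_right_cancel₀ (ne_of_gt h1) (by linarith [h6] : βm * βh * e * (A - u₁) * u₂ * u₁ = μm * ρh * u₁)
      exact this
    calc βm * βh * e * (A - u₁) * H = βm * βh * e * (A - u₁) * u₂ * (βh * u₁ + μh) := by
            rw [e2]; ring
      _ = μm * ρh * (βh * u₁ + μh) := by rw [h7]
  nlinarith [mul_pos (mul_pos hμm hρh) (mul_pos hβh h1),
    mul_pos (mul_pos (mul_pos (mul_pos hβm hβh) hepos) h1) hH]
end

section
/- Let μ_h, τ_b > 0 and suppose R₀² = β_h β_m A H e^{−μ_h τ_b}/(μ_h μ_m ρ_h) > 1. Then the unique positive steady state components satisfy u₁* = (μ_h μ_m ρ_h (R₀² − 1))/(β_m β_h H e^{−μ_h τ_b} + β_h μ_m ρ_h), u₂* = H/(β_h u₁* + μ_h), and u₃* = β_h e^{−μ_h τ_b} u₁* u₂*/ρ_h, i.e., these explicit formulas solve the three steady-state equations. -/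
theorem explicit_steady_state_formulas
    (βh βm A H μh μm ρh τb : ℝ)
    (hβh : 0 < βh) (hβm : 0 < βm) (hA : 0 < A) (hH : 0 < H)
    (hμh : 0 < μh) (hμm : 0 < μm) (hρh : 0 < ρh) (hτb : 0 < τb)
    (hR0 : 1 < βh * βm * A * H * Real.exp (-μh * τb) / (μh * μm * ρh)) :
    let R0sq := βh * βm * A * H * Real.exp (-μh * τb) / (μh * μm * ρh)
    let u₁ := μh * μm * ρh * (R0sq - 1) /
      (βm * βh * H * Real.exp (-μh * τb) + βh * μm * ρh)
    let u₂ := H / (βh * u₁ + μh)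
    let u₃ := βh * Real.exp (-μh * τb) * u₁ * u₂ / ρh
    0 < u₁ ∧ 0 < u₂ ∧ 0 < u₃ ∧
    βm * (A - u₁) * u₃ = μm * u₁ ∧
    H = βh * u₁ * u₂ + μh * u₂ ∧
    βh * Real.exp (-μh * τb) * u₁ * u₂ = ρh * u₃ := by
  intro R0sq u₁ u₂ u₃
  have hE : 0 < Real.exp (-μh * τb) := Real.exp_pos _
  have hden : 0 < βm * βh * H * Real.exp (-μh * τb) + βh * μm * ρh := by positivity
  have hu1 : 0 < u₁ := by
    apply div_pos _ hden
    have : 0 < R0sq - 1 := by simpa [R0sq] using sub_pos.mpr hR0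
    positivity
  have hden2 : 0 < βh * u₁ + μh := by positivity
  have hu2 : 0 < u₂ := div_pos hH hden2
  have hu3 : 0 < u₃ := by
    have : 0 < βh * Real.exp (-μh * τb) * u₁ * u₂ := by positivity
    exact div_pos this hρh
  refine ⟨hu1, hu2, hu3, ?_, ?_, ?_⟩
  · show βm * (A - u₁) * u₃ = μm * u₁
    have h1 : u₁ * (βm * βh * H * Real.exp (-μh * τb) + βh * μm * ρh)
        = βh * βm * A * H * Real.exp (-μh * τb) - μh * μm * ρh := by
      simp only [u₁, R0sq]
      field_simp
    have key : ∀ x : ℝ, 0 < βh * x + μh →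
        x * (βm * βh * H * Real.exp (-μh * τb) + βh * μm * ρh)
          = βh * βm * A * H * Real.exp (-μh * τb) - μh * μm * ρh →
        βm * (A - x) * (βh * Real.exp (-μh * τb) * x * (H / (βh * x + μh)) / ρh) = μm * x := by
      intro x hx hx1
      generalize Real.exp (-μh * τb) = E at hx1 ⊢
      have hx' : x * βh + μh ≠ 0 := by rw [mul_comm]; exact hx.ne'
      field_simp
      linear_combination (-x) * hx1
    exact key u₁ hden2 h1
  · show H = βh * u₁ * u₂ + μh * u₂
    simp only [u₂]
    field_simp
  · show βh * Real.exp (-μh * τb) * u₁ * u₂ = ρh * u₃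
    simp only [u₃]
    field_simp
end
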